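/- Let x_1, ..., x_n be points spanning a k-dimensional space, and v ∈ [0,1]^n a vector such that for every linearly independent subset B of size k, Σ_{i=1}^n v_i ≥ (n/k)Σ_{i∈B} v_i + 1, where k divides n. Assume v_1 ≥ ... ≥ v_n. Let B = {i_1 < ... < i_k} be the lexicographically greedy maximum-weight basis. Then there exists κ ∈ {1,...,k−1} with i_{κ+1} > (n/k)κ + 1, and consequently the points x_1, ..., x_{⌊(n/k)κ⌋+1} all lie in a κ-dimensional subspace. -/

import Mathlib

/-- Let `x_1,...,x_n` span a `k`-dimensional space (`k ∣ n`), and let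
`v ∈ [0,1]^n` be nonincreasing with `Σ_i v_i ≥ (n/k) Σ_{i∈B'} v_i + 1` for every
linearly independent subset `B'` of size `k`. If `i : Fin k → Fin n` enumerates the
greedy maximum-weight basis (0-based; greedy: every point with index `< i κ` lies in
the span of the first `κ` chosen points), then there is `κ ∈ {1,...,k−1}` with
`i_{κ+1} > (n/k)κ + 1`, and the points `x_1,...,x_{(n/k)κ+1}` all lie in a
`κ`-dimensional subspace (the span of the first `κ` chosen points). -/
theorem stmt_8 {d n k : ℕ} (hk : 0 < k) (hn : 0 < n) (hdvd : k ∣ n)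
    (x : Fin n → (Fin d → ℝ))
    (hspan : Module.finrank ℝ (Submodule.span ℝ (Set.range x)) = k)
    (v : Fin n → ℝ) (h01 : ∀ j, v j ∈ Set.Icc (0 : ℝ) 1) (hmono : Antitone v)
    (hLP : ∀ B : Finset (Fin n), B.card = k →
      LinearIndependent ℝ (fun j : B => x j) →
      (n : ℝ) / k * ∑ j ∈ B, v j + 1 ≤ ∑ j, v j)
    (i : Fin k → Fin n) (hstrict : StrictMono i)
    (h0 : (i ⟨0, hk⟩).val = 0)
    (hindep : LinearIndependent ℝ (fun j => x (i j)))
    (hgreedy : ∀ κ : Fin k, ∀ m : Fin n, m < i κ →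
      x m ∈ Submodule.span ℝ {y | ∃ j : Fin k, j < κ ∧ y = x (i j)}) :
    ∃ κ : Fin k, 1 ≤ κ.val ∧ (n / k) * κ.val < (i κ).val ∧
      Module.finrank ℝ (Submodule.span ℝ {y | ∃ j : Fin k, j < κ ∧ y = x (i j)}) ≤ κ.val ∧
      ∀ m : Fin n, m.val ≤ (n / k) * κ.val →
        x m ∈ Submodule.span ℝ {y | ∃ j : Fin k, j < κ ∧ y = x (i j)} := by
  set q := n / k with hq_def
  have hq : k * q = n := Nat.mul_div_cancel' hdvd
  have hqpos : 0 < q := Nat.div_pos (Nat.le_of_dvd hn hdvd) hk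
  -- Key existence claim
  have hex : ∃ κ : Fin k, 1 ≤ κ.val ∧ q * κ.val < (i κ).val := by
    by_contra hcon
    push_neg at hcon
    have hall : ∀ κ : Fin k, (i κ).val ≤ q * κ.val := by
      intro κ
      rcases Nat.eq_zero_or_pos κ.val with h | h
      · have : κ = ⟨0, hk⟩ := Fin.ext h
        simp [this, h0, h]
      · exact hcon κ h
    set S := ∑ κ, v (i κ) with hS
    have hsum : (∑ j, v j) ≤ (q : ℝ) * S := by
      have e1 : (∑ j, v j) = ∑ p : Fin k × Fin q, v (Fin.cast hq (finProdFinEquiv p)) := by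
        exact (Fintype.sum_equiv (finProdFinEquiv.trans (finCongr hq)) _ _ (fun p => rfl)).symm
      rw [e1]
      have e2 : ∀ p : Fin k × Fin q, v (Fin.cast hq (finProdFinEquiv p)) ≤ v (i p.1) := by
        intro p
        apply hmono
        have : (i p.1).val ≤ q * p.1.val := hall p.1
        simp only [Fin.le_def, Fin.coe_cast, finProdFinEquiv_apply_val]
        omega
      calc ∑ p : Fin k × Fin q, v (Fin.cast hq (finProdFinEquiv p))
          ≤ ∑ p : Fin k × Fin q, v (i p.1) := Finset.sum_le_sum (fun p _ => e2 p)
        _ = (q : ℝ) * S := by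
            rw [Fintype.sum_prod_type]
            simp only [Finset.sum_const, Finset.card_univ, Fintype.card_fin, nsmul_eq_mul]
            rw [hS, Finset.mul_sum]
    -- apply hLP to the image of i
    have hmem : ∀ κ, i κ ∈ Finset.image i Finset.univ := fun κ =>
      Finset.mem_image_of_mem i (Finset.mem_univ κ)
    have hcard : (Finset.image i Finset.univ).card = k := by
      rw [Finset.card_image_of_injective _ hstrict.injective, Finset.card_univ, Fintype.card_fin]
    have hBsum : ∑ j ∈ Finset.image i Finset.univ, v j = S := by
      rw [Finset.sum_image (fun a _ b _ h => hstrict.injective h)]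
    have hBindep : LinearIndependent ℝ (fun j : (Finset.image i Finset.univ : Finset (Fin n)) => x j) := by
      let e : Fin k ≃ (Finset.image i Finset.univ : Finset (Fin n)) :=
        Equiv.ofBijective (fun κ => ⟨i κ, hmem κ⟩)
          ⟨fun a b h => hstrict.injective (congrArg Subtype.val h),
           fun j => by
            obtain ⟨κ, _, hκ⟩ := Finset.mem_image.mp j.2
            exact ⟨κ, Subtype.ext hκ⟩⟩
      exact (linearIndependent_equiv e).mp hindep
    have hlp := hLP _ hcard hBindep
    rw [hBsum] at hlp
    have hcast : (n : ℝ) / k = (q : ℝ) := by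
      field_simp
      exact_mod_cast hq.symm
    rw [hcast] at hlp
    linarith
  obtain ⟨κ, hκ1, hκ2⟩ := hex
  refine ⟨κ, hκ1, hκ2, ?_, ?_⟩
  · have hset : {y | ∃ j : Fin k, j < κ ∧ y = x (i j)} =
        Set.range (fun t : Fin κ.val => x (i ⟨t.val, t.isLt.trans κ.isLt⟩)) := by
      ext y
      constructor
      · rintro ⟨j, hj, rfl⟩
        exact ⟨⟨j.val, hj⟩, rfl⟩
      · rintro ⟨t, rfl⟩
        exact ⟨⟨t.val, t.isLt.trans κ.isLt⟩, by simpa [Fin.lt_def] using t.isLt, rfl⟩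
    rw [hset]
    simpa [Set.finrank] using  finrank_range_le_card (R := ℝ) (fun t : Fin κ.val => x (i ⟨t.val, t.isLt.trans κ.isLt⟩))
  · intro m hm
    exact hgreedy κ m (by rw [Fin.lt_def]; omega)
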